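/- Let H be a Hilbert space, U : H → H an isometry, f ∈ H, and A = {a_i : i ∈ ℕ} a strictly increasing sequence of naturals. If {U^{a_n} f : n ∈ ℕ} is pre-compact in H, then there exists a strictly increasing sequence (n_k) of naturals with U^{n_k} f → f in norm, i.e. f is rigid. -/

import Mathlib

open MeasureTheory Filter Topology

theorem stmt2 {H : Type*} [NormedAddCommGroup H] [InnerProductSpace ℝ H]
    [CompleteSpace H]
    (U : H → H) (hU : Isometry U) (hlin : IsLinearMap ℝ U)
    (f : H) (a : ℕ → ℕ) (ha : StrictMono a)
    (hpc : TotallyBounded {g : H | ∃ n : ℕ, g = U^[a n] f}) :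
    ∃ t : ℕ → ℕ, StrictMono t ∧ Tendsto (fun k => U^[t k] f) atTop (𝓝 f) := by
  -- Key claim: for every ε > 0 and N, there is t > N with dist (U^[t] f) f < ε
  have key : ∀ ε : ℝ, 0 < ε → ∀ N : ℕ, ∃ t : ℕ, N < t ∧ dist (U^[t] f) f < ε := by
    intro ε hε N
    obtain ⟨s, hsfin, hs⟩ := (Metric.totallyBounded_iff.mp hpc) (ε/2) (by positivity)
    -- assign to each n a center of a ball containing U^[a n] f
    have hc : ∀ n : ℕ, ∃ y : H, y ∈ s ∧ dist (U^[a n] f) y < ε/2 := by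
      intro n
      have : U^[a n] f ∈ {g : H | ∃ n : ℕ, g = U^[a n] f} := ⟨n, rfl⟩
      obtain ⟨y, hy, hmem⟩ := Set.mem_iUnion₂.mp (hs this)
      exact ⟨y, hy, Metric.mem_ball.mp hmem⟩
    choose c hcs hcd using hc
    -- pigeonhole: some fiber of c is infinite
    have hsfin' : s.Finite := hsfin
    have : ∃ y ∈ s, {n : ℕ | c n = y}.Infinite := by
      by_contra h
      push_neg at h
      have : (Set.univ : Set ℕ).Finite := by
        have : (Set.univ : Set ℕ) ⊆ ⋃ y ∈ s, {n : ℕ | c n = y} := by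
          intro n _
          exact Set.mem_iUnion₂.mpr ⟨c n, hcs n, rfl⟩
        refine Set.Finite.subset ?_ this
        exact hsfin'.biUnion (fun y hy => h y hy)
      exact Set.infinite_univ this
    obtain ⟨y, _, hyinf⟩ := this
    obtain ⟨m, hm⟩ := hyinf.nonempty
    -- pick n in the fiber with a n > a m + N
    obtain ⟨n, hn, hnlarge⟩ := hyinf.exists_gt (a m + N)
    have han : a m + N < a n := lt_of_lt_of_le hnlarge ha.le_apply
    refine ⟨a n - a m, by omega, ?_⟩
    have hsplit : a m + (a n - a m) = a n := by omega
    have hUiter : ∀ j : ℕ, Isometry (U^[j]) := by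
      intro j
      induction j with
      | zero => simpa using isometry_id
      | succ j ih => rw [Function.iterate_succ]; exact ih.comp hU
    have hiso : dist (U^[a m] (U^[a n - a m] f)) (U^[a m] f) = dist (U^[a n - a m] f) f :=
      (hUiter (a m)).dist_eq _ _
    rw [← Function.iterate_add_apply, hsplit] at hiso
    rw [← hiso]
    calc dist (U^[a n] f) (U^[a m] f)
        ≤ dist (U^[a n] f) y + dist (U^[a m] f) y := dist_triangle_right _ _ _
      _ < ε/2 + ε/2 := by
          have h1 := hcd n; have h2 := hcd m
          rw [hn] at h1; rw [hm] at h2; linarith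
      _ = ε := by ring
  -- build the sequence recursively
  have keyk : ∀ k : ℕ, ∀ N : ℕ, ∃ t : ℕ, N < t ∧ dist (U^[t] f) f < 1/((k:ℝ)+1) := by
    intro k N
    exact key (1/((k:ℝ)+1)) (by positivity) N
  choose g hg1 hg2 using keyk
  let t : ℕ → ℕ := fun k => Nat.rec (g 0 0) (fun k tk => g (k+1) tk) k
  have htsucc : ∀ k : ℕ, t k < t (k+1) := fun k => hg1 (k+1) (t k)
  have hbound : ∀ k : ℕ, dist (U^[t k] f) f < 1/((k:ℝ)+1) := by
    intro k
    cases k with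
    | zero => exact hg2 0 0
    | succ k => exact hg2 (k+1) (t k)
  refine ⟨t, strictMono_nat_of_lt_succ htsucc, ?_⟩
  rw [tendsto_iff_dist_tendsto_zero]
  refine squeeze_zero (fun k => dist_nonneg) (fun k => (hbound k).le) ?_
  exact tendsto_one_div_add_atTop_nhds_zero_nat
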